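/- arXiv:1805.01462 — 2 statements merged into one kernel-verified Lean document; each statement's English description precedes it below -/
import Mathlib

section
/- Let x > 0 and α > -1, and for each integer k ≥ 0 set I_k(β) = ∫₀^∞ x^(t+α) t^β (log t)^k / Γ(t+α+1) dt, and for odd n ≥ 1 put Δ_n(β) = I_{n-1}(β) I_{n+1}(β) − I_n(β)². Then the Schur-type inequality (β₁−β₂)(β₁−β₃)Δ_n(β₁) + (β₂−β₁)(β₂−β₃)Δ_n(β₂) + (β₃−β₁)(β₃−β₂)Δ_n(β₃) ≥ 0 holds for all β₁, β₂, β₃ > -1. -/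
open MeasureTheory Real Set

lemma schur_exp_sorted (L a b c : ℝ) (hcb : c ≤ b) (hba : b ≤ a) :
    0 ≤ (a-b)*(a-c)*exp (L*a) + (b-a)*(b-c)*exp (L*b) + (c-a)*(c-b)*exp (L*c) := by
  have h1 : exp (L*a) = exp (L*b) * exp (L*(a-b)) := by rw [← exp_add]; ring_nf
  have h2 : exp (L*c) = exp (L*b) * exp (L*(c-b)) := by rw [← exp_add]; ring_nf
  have h3 := add_one_le_exp (L*(a-b))
  have h4 := add_one_le_exp (L*(c-b))
  have h5 := exp_pos (L*b)
  have key : (a-c) * exp (L*b) ≤ (b-c) * exp (L*a) + (a-b) * exp (L*c) := by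
    have k1 := mul_le_mul_of_nonneg_left h3 (mul_nonneg (sub_nonneg.2 hcb) h5.le)
    have k2 := mul_le_mul_of_nonneg_left h4 (mul_nonneg (sub_nonneg.2 hba) h5.le)
    nlinarith [k1, k2]
  rcases eq_or_lt_of_le (hcb.trans hba) with heq | hlt
  · have hb : b = a := le_antisymm hba (heq ▸ hcb)
    rw [hb, heq]
    ring_nf
    simp
  · have key2 := mul_le_mul_of_nonneg_left key
      (mul_nonneg (sub_nonneg.2 hba) (sub_nonneg.2 hcb))
    have e1 := (exp_pos (L*a)).le
    have e3 := (exp_pos (L*c)).le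
    have hS : 0 ≤ ((a-b)*(a-c)*exp (L*a) + (b-a)*(b-c)*exp (L*b) + (c-a)*(c-b)*exp (L*c)) * (a-c) := by
      nlinarith [key2,
        mul_nonneg (mul_nonneg (mul_nonneg (sub_nonneg.2 hba) (sub_nonneg.2 hba)) (by linarith : (0:ℝ) ≤ a + b - 2*c)) e1,
        mul_nonneg (mul_nonneg (mul_nonneg (sub_nonneg.2 hcb) (sub_nonneg.2 hcb)) (by linarith : (0:ℝ) ≤ 2*a - b - c)) e3]
    exact le_of_mul_le_mul_right (by simpa using hS) (sub_pos.2 hlt)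

lemma schur_exp (L a b c : ℝ) :
    0 ≤ (a-b)*(a-c)*exp (L*a) + (b-a)*(b-c)*exp (L*b) + (c-a)*(c-b)*exp (L*c) := by
  rcases le_total a b with h1 | h1 <;> rcases le_total b c with h2 | h2 <;>
    rcases le_total a c with h3 | h3
  · exact (schur_exp_sorted L c b a h1 h2).trans_eq (by ring)
  · exact (schur_exp_sorted L c b a h1 h2).trans_eq (by ring)
  · exact (schur_exp_sorted L b c a h3 h2).trans_eq (by ring)
  · exact (schur_exp_sorted L b a c h3 h1).trans_eq (by ring)
  · exact (schur_exp_sorted L c a b h1 h3).trans_eq (by ring)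
  · exact (schur_exp_sorted L a c b h2 h3).trans_eq (by ring)
  · exact (schur_exp_sorted L a b c h2 h1).trans_eq (by ring)
  · exact (schur_exp_sorted L a b c h2 h1).trans_eq (by ring)

lemma gamma_lb (s M : ℝ) (hs : 1 ≤ s) (hM : 1 ≤ M) :
    exp (-(M+1)) * M ^ (s-1) ≤ Real.Gamma s := by
  have hs0 : (0:ℝ) < s := by linarith
  rw [Real.Gamma_eq_integral hs0]
  have hsub : Ioc M (M+1) ⊆ Ioi (0:ℝ) := fun u hu => lt_of_lt_of_le (by linarith) hu.1.le
  have hInt := Real.GammaIntegral_convergent hs0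
  calc exp (-(M+1)) * M ^ (s-1)
      = ∫ _ in Ioc M (M+1), exp (-(M+1)) * M ^ (s-1) := by
        rw [setIntegral_const]
        simp [Real.volume_Ioc]
    _ ≤ ∫ u in Ioc M (M+1), exp (-u) * u ^ (s-1) := by
        apply setIntegral_mono_on (integrableOn_const (by simp [Real.volume_Ioc]))
          (hInt.mono_set hsub) measurableSet_Ioc
        intro u hu
        have hu0 : (0:ℝ) < M := by linarith
        exact mul_le_mul (Real.exp_le_exp.2 (by linarith [hu.2]))
          (rpow_le_rpow hu0.le hu.1.le (by linarith)) (rpow_nonneg hu0.le _) (exp_pos _).le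
    _ ≤ ∫ u in Ioi 0, exp (-u) * u ^ (s-1) := by
        apply setIntegral_mono_set hInt
        · filter_upwards [ae_restrict_mem measurableSet_Ioi] with u hu
          exact mul_nonneg (exp_pos _).le (rpow_nonneg (le_of_lt hu) _)
        · exact HasSubset.Subset.eventuallyLE hsub

lemma gamma_lb0 (s : ℝ) (hs : 0 < s) :
    exp (-1) * (2:ℝ) ^ (-s-1) / 2 ≤ Real.Gamma s := by
  rw [Real.Gamma_eq_integral hs]
  have hsub : Ioc (1/2 : ℝ) 1 ⊆ Ioi (0:ℝ) := fun u hu => lt_of_lt_of_le (by norm_num) hu.1.le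
  have hInt := Real.GammaIntegral_convergent hs
  calc exp (-1) * (2:ℝ) ^ (-s-1) / 2
      = ∫ _ in Ioc (1/2 : ℝ) 1, exp (-1) * (2:ℝ) ^ (-s-1) := by
        rw [setIntegral_const]
        rw [Real.volume_real_Ioc]
        norm_num
        ring
    _ ≤ ∫ u in Ioc (1/2 : ℝ) 1, exp (-u) * u ^ (s-1) := by
        apply setIntegral_mono_on (integrableOn_const (by simp [Real.volume_Ioc]))
          (hInt.mono_set hsub) measurableSet_Ioc
        intro u hu
        have hu0 : (0:ℝ) < u := hsub hu
        have h1 : exp (-1) ≤ exp (-u) := Real.exp_le_exp.2 (by linarith [hu.2])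
        have h2 : (2:ℝ) ^ (-s-1) ≤ u ^ (s-1) := by
          rcases le_total 1 s with h | h
          · have e : ((1:ℝ)/2) ^ (s-1) = (2:ℝ) ^ (-(s-1)) := by
              rw [one_div, Real.inv_rpow (by norm_num : (0:ℝ) ≤ 2), ← Real.rpow_neg (by norm_num : (0:ℝ) ≤ 2)]
            calc (2:ℝ) ^ (-s-1) ≤ (2:ℝ) ^ (-(s-1)) :=
                rpow_le_rpow_of_exponent_le one_le_two (by linarith)
            _ = ((1:ℝ)/2) ^ (s-1) := e.symm
            _ ≤ u ^ (s-1) := rpow_le_rpow (by norm_num) hu.1.le (by linarith)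
          · calc (2:ℝ) ^ (-s-1) ≤ 1 :=
                Real.rpow_le_one_of_one_le_of_nonpos one_le_two (by linarith)
            _ ≤ u ^ (s-1) :=
                Real.one_le_rpow_of_pos_of_le_one_of_nonpos hu0 hu.2 (by linarith)
        exact mul_le_mul h1 h2 (rpow_nonneg (by norm_num) _) (exp_pos _).le
    _ ≤ ∫ u in Ioi 0, exp (-u) * u ^ (s-1) := by
        apply setIntegral_mono_set hInt
        · filter_upwards [ae_restrict_mem measurableSet_Ioi] with u hu
          exact mul_nonneg (exp_pos _).le (rpow_nonneg (le_of_lt hu) _)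
        · exact HasSubset.Subset.eventuallyLE hsub

lemma volterra_contOn (x α : ℝ) (hx : 0 < x) (hα : -1 < α) (k : ℕ) (β : ℝ) :
    ContinuousOn (fun t : ℝ => x ^ (t + α) * t ^ β * (Real.log t) ^ k / Real.Gamma (t + α + 1))
      (Ioi 0) := by
  have hne : ∀ t : ℝ, t ∈ Ioi (0:ℝ) → ∀ m : ℕ, t + α + 1 ≠ -(m:ℝ) := by
    intro t ht m h
    have h1 : (0:ℝ) ≤ (m:ℝ) := Nat.cast_nonneg m
    have ht' : (0:ℝ) < t := ht
    linarith
  have hGc : ContinuousOn (fun t : ℝ => Real.Gamma (t + α + 1)) (Ioi 0) := by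
    intro t ht
    have hca : ContinuousAt (fun t : ℝ => Real.Gamma (t + α + 1)) t :=
      ContinuousAt.comp (f := fun t : ℝ => t + α + 1) (g := Real.Gamma)
        (Real.differentiableAt_Gamma (hne t ht)).continuousAt
        (by fun_prop : Continuous fun t : ℝ => t + α + 1).continuousAt
    exact hca.continuousWithinAt
  have h1 : Continuous fun t : ℝ => x ^ (t + α) :=
    Continuous.rpow continuous_const (by fun_prop) (fun t => Or.inl hx.ne')
  have h2 : ContinuousOn (fun t : ℝ => t ^ β) (Ioi 0) :=
    ContinuousOn.rpow_const continuousOn_id (fun t ht => Or.inl (ne_of_gt ht))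
  have h3 : ContinuousOn (fun t : ℝ => (Real.log t) ^ k) (Ioi 0) :=
    (Real.continuousOn_log.mono (fun t ht => ne_of_gt ht)).pow k
  exact ((h1.continuousOn.mul h2).mul h3).div hGc
    (fun t ht => (Real.Gamma_pos_of_pos (by simp only [mem_Ioi] at ht; linarith)).ne')

lemma volterra_integrable (x α : ℝ) (hx : 0 < x) (hα : -1 < α) (k : ℕ) (β : ℝ) (hβ : -1 < β) :
    IntegrableOn (fun t : ℝ => x ^ (t + α) * t ^ β * (Real.log t) ^ k / Real.Gamma (t + α + 1))
      (Ioi 0) := by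
  have hcont := volterra_contOn x α hx hα k β
  rw [← Ioc_union_Ioi_eq_Ioi (zero_le_one : (0:ℝ) ≤ 1), integrableOn_union]
  constructor
  · -- on Ioc 0 1
    set δ : ℝ := (β + 1) / (2 * (k + 1)) with hδ
    have hδ0 : 0 < δ := div_pos (by linarith) (by positivity)
    have hδk : δ * k ≤ (β + 1) / 2 := by
      rw [hδ, div_mul_eq_mul_div, div_le_div_iff₀ (by positivity) (by norm_num)]
      have hk : (k:ℝ) ≤ k + 1 := by linarith
      nlinarith [hk, hβ]
    set c₂ : ℝ := exp (-1) * (2:ℝ) ^ (-(α+2)-1) / 2 with hc₂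
    have hc₂0 : 0 < c₂ := by positivity
    set A : ℝ := x ^ α * max 1 x with hA
    have hA0 : 0 < A := by positivity
    set C : ℝ := A * (δ⁻¹) ^ k / c₂ with hC
    apply Integrable.mono' (g := fun t => C * t ^ ((β-1)/2))
    · exact (((intervalIntegrable_iff_integrableOn_Ioc_of_le
        (zero_le_one : (0:ℝ) ≤ 1)).mp
          (intervalIntegral.intervalIntegrable_rpow' (by linarith))).const_mul C)
    · exact ((hcont.mono (fun t (ht : t ∈ Ioc (0:ℝ) 1) => ht.1)).aestronglyMeasurable
        measurableSet_Ioc)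
    · filter_upwards [ae_restrict_mem measurableSet_Ioc] with t ht
      have ht0 : (0:ℝ) < t := ht.1
      have ht1 : t ≤ 1 := ht.2
      have hΓpos : 0 < Real.Gamma (t + α + 1) := Real.Gamma_pos_of_pos (by linarith)
      have hxt : x ^ t ≤ max 1 x := by
        rcases le_total x 1 with hx1 | hx1
        · calc x ^ t ≤ x ^ (0:ℝ) := rpow_le_rpow_of_exponent_ge hx hx1 ht0.le
            _ = 1 := rpow_zero x
            _ ≤ max 1 x := le_max_left _ _
        · calc x ^ t ≤ x ^ (1:ℝ) := rpow_le_rpow_of_exponent_le hx1 ht1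
            _ = x := rpow_one x
            _ ≤ max 1 x := le_max_right _ _
      have hb1 : x ^ (t + α) ≤ A := by
        rw [Real.rpow_add hx, hA]
        calc x ^ t * x ^ α ≤ max 1 x * x ^ α :=
              mul_le_mul_of_nonneg_right hxt (rpow_nonneg hx.le α)
          _ = x ^ α * max 1 x := mul_comm _ _
      -- log bound
      have hlog1 : -Real.log t ≤ δ⁻¹ * t ^ (-δ) := by
        have h := Real.log_le_sub_one_of_pos (rpow_pos_of_pos ht0 (-δ))
        rw [Real.log_rpow ht0] at h
        have h2 : -δ * Real.log t ≤ t ^ (-δ) := by linarith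
        rw [neg_mul] at h2
        calc -Real.log t = δ⁻¹ * (-(δ * Real.log t)) := by
              field_simp
              try ring
          _ ≤ δ⁻¹ * t ^ (-δ) := mul_le_mul_of_nonneg_left h2 (by positivity)
      have hlogk : |Real.log t| ^ k ≤ (δ⁻¹) ^ k * t ^ (-(δ * k)) := by
        have habs : |Real.log t| = -Real.log t := abs_of_nonpos (Real.log_nonpos ht0.le ht1)
        calc |Real.log t| ^ k ≤ (δ⁻¹ * t ^ (-δ)) ^ k := by
              apply pow_le_pow_left₀ (by rw [habs]; linarith [Real.log_nonpos ht0.le ht1]) _ k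
              rw [habs]; exact hlog1
          _ = (δ⁻¹) ^ k * (t ^ (-δ)) ^ k := mul_pow _ _ k
          _ = (δ⁻¹) ^ k * t ^ (-(δ * k)) := by
              rw [← Real.rpow_natCast (t ^ (-δ)) k, ← Real.rpow_mul ht0.le]
              ring_nf
      have htb : t ^ β * t ^ (-(δ * k)) ≤ t ^ ((β-1)/2) := by
        rw [← Real.rpow_add ht0]
        exact rpow_le_rpow_of_exponent_ge ht0 ht1 (by linarith [hδk])
      -- Gamma lower bound
      have hΓlb : c₂ ≤ Real.Gamma (t + α + 1) := by
        have h := gamma_lb0 (t + α + 1) (by linarith)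
        refine le_trans ?_ h
        have h2 : (2:ℝ) ^ (-(α+2)-1) ≤ (2:ℝ) ^ (-(t+α+1)-1) :=
          rpow_le_rpow_of_exponent_le one_le_two (by linarith)
        rw [hc₂]
        have := mul_le_mul_of_nonneg_left h2 (exp_pos (-1)).le
        linarith
      -- assemble
      have hnorm : ‖x ^ (t + α) * t ^ β * (Real.log t) ^ k / Real.Gamma (t + α + 1)‖
          = x ^ (t + α) * t ^ β * |Real.log t| ^ k / Real.Gamma (t + α + 1) := by
        rw [Real.norm_eq_abs, abs_div, abs_of_pos hΓpos, abs_mul, abs_mul, abs_pow,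
          abs_of_nonneg (rpow_nonneg hx.le _), abs_of_nonneg (rpow_nonneg ht0.le _)]
      rw [hnorm]
      calc x ^ (t + α) * t ^ β * |Real.log t| ^ k / Real.Gamma (t + α + 1)
          ≤ A * ((δ⁻¹) ^ k * t ^ ((β-1)/2)) / c₂ := by
            apply div_le_div₀ (by positivity) ?_ hc₂0 hΓlb
            calc x ^ (t + α) * t ^ β * |Real.log t| ^ k
                ≤ A * (t ^ β * ((δ⁻¹) ^ k * t ^ (-(δ * k)))) := by
                  rw [mul_assoc]
                  apply mul_le_mul hb1 ?_ (by positivity) hA0.le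
                  exact mul_le_mul_of_nonneg_left hlogk (rpow_nonneg ht0.le β)
              _ = A * ((δ⁻¹) ^ k * (t ^ β * t ^ (-(δ * k)))) := by ring
              _ ≤ A * ((δ⁻¹) ^ k * t ^ ((β-1)/2)) := by
                  apply mul_le_mul_of_nonneg_left _ hA0.le
                  exact mul_le_mul_of_nonneg_left htb (by positivity)
        _ = C * t ^ ((β-1)/2) := by rw [hC]; ring
  · -- on Ioi 1
    set M : ℝ := max 1 (exp 2 * x) with hM
    have hM1 : (1:ℝ) ≤ M := le_max_left _ _
    have hM0 : (0:ℝ) < M := lt_of_lt_of_le one_pos hM1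
    have hxM : x ≤ exp (-2) * M := by
      have h := le_max_right 1 (exp 2 * x)
      calc x = exp (-2) * (exp 2 * x) := by rw [← mul_assoc, ← exp_add]; norm_num
        _ ≤ exp (-2) * M := mul_le_mul_of_nonneg_left h (exp_pos _).le
    set C' : ℝ := exp (M+1) * exp (-2*α) with hC'
    have hC'0 : 0 < C' := by positivity
    apply Integrable.mono' (g := fun t => C' * (exp (-t) * t ^ (β + k)))
    · have h := Real.GammaIntegral_convergent (show (0:ℝ) < β + k + 1 by
        have : (0:ℝ) ≤ k := Nat.cast_nonneg k; linarith)
      have h2 : IntegrableOn (fun u : ℝ => exp (-u) * u ^ (β + (k:ℝ))) (Ioi 1) := by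
        have := h.mono_set (Ioi_subset_Ioi zero_le_one : Ioi (1:ℝ) ⊆ Ioi 0)
        simpa using this
      exact h2.const_mul C'
    · exact ((hcont.mono (fun t (ht : t ∈ Ioi (1:ℝ)) => mem_Ioi.2 (lt_trans zero_lt_one (mem_Ioi.1 ht)))).aestronglyMeasurable
        measurableSet_Ioi)
    · filter_upwards [ae_restrict_mem measurableSet_Ioi] with t ht
      have ht1 : (1:ℝ) < t := ht
      have ht0 : (0:ℝ) < t := lt_trans zero_lt_one ht1
      have hlog0 : 0 ≤ Real.log t := Real.log_nonneg ht1.le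
      have hΓpos : 0 < Real.Gamma (t + α + 1) := Real.Gamma_pos_of_pos (by linarith)
      have h0ta : (0:ℝ) ≤ t + α := by linarith
      have hΓ : exp (-(M+1)) * M ^ (t+α) ≤ Real.Gamma (t + α + 1) := by
        have h := gamma_lb (t+α+1) M (by linarith) hM1
        rw [show t+α+1-1 = t+α by ring] at h
        exact h
      have hbx : x ^ (t+α) ≤ exp (-2*α) * exp (-t) * M ^ (t+α) := by
        calc x ^ (t+α) ≤ (exp (-2) * M) ^ (t+α) := rpow_le_rpow hx.le hxM h0ta
          _ = exp (-2) ^ (t+α) * M ^ (t+α) := mul_rpow (exp_pos _).le hM0.le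
          _ = exp (-2*(t+α)) * M ^ (t+α) := by rw [← Real.exp_mul]
          _ ≤ exp (-2*α) * exp (-t) * M ^ (t+α) := by
              apply mul_le_mul_of_nonneg_right _ (rpow_nonneg hM0.le _)
              rw [← exp_add]
              exact exp_le_exp.2 (by linarith)
      have hblog : (Real.log t) ^ k ≤ t ^ k :=
        pow_le_pow_left₀ hlog0 (by linarith [Real.log_le_sub_one_of_pos ht0]) k
      have htk : t ^ β * (t:ℝ) ^ (k:ℕ) = t ^ (β + (k:ℝ)) := by
        rw [← Real.rpow_natCast t k, ← Real.rpow_add ht0]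
      have hnum : x ^ (t + α) * t ^ β * (Real.log t) ^ k
          ≤ exp (-2*α) * exp (-t) * M ^ (t+α) * t ^ (β + (k:ℝ)) := by
        calc x ^ (t + α) * t ^ β * (Real.log t) ^ k
            ≤ (exp (-2*α) * exp (-t) * M ^ (t+α)) * (t ^ β * t ^ k) := by
              rw [mul_assoc]
              apply mul_le_mul hbx (mul_le_mul_of_nonneg_left hblog (rpow_nonneg ht0.le β))
                (by positivity) (by positivity)
          _ = exp (-2*α) * exp (-t) * M ^ (t+α) * t ^ (β + (k:ℝ)) := by rw [htk]
      have hnorm : ‖x ^ (t + α) * t ^ β * (Real.log t) ^ k / Real.Gamma (t + α + 1)‖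
          = x ^ (t + α) * t ^ β * (Real.log t) ^ k / Real.Gamma (t + α + 1) := by
        apply abs_of_nonneg
        apply div_nonneg _ hΓpos.le
        have := rpow_nonneg hx.le (t+α)
        have := rpow_nonneg ht0.le β
        positivity
      rw [hnorm, div_le_iff₀ hΓpos]
      have hee : exp (M+1) * exp (-(M+1)) = 1 := by
        have h0 : M + 1 + -(M+1) = 0 := by ring
        rw [← exp_add, h0, exp_zero]
      calc x ^ (t + α) * t ^ β * (Real.log t) ^ k
          ≤ exp (-2*α) * exp (-t) * M ^ (t+α) * t ^ (β + (k:ℝ)) := hnum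
        _ = (C' * (exp (-t) * t ^ (β + (k:ℝ)))) * (exp (-(M+1)) * M ^ (t+α)) := by
            rw [hC']
            calc exp (-2*α) * exp (-t) * M ^ (t+α) * t ^ (β + (k:ℝ))
                = (exp (M+1) * exp (-(M+1))) *
                    (exp (-2*α) * exp (-t) * M ^ (t+α) * t ^ (β + (k:ℝ))) := by
                  rw [hee, one_mul]
              _ = exp (M+1) * exp (-2*α) * (exp (-t) * t ^ (β + (k:ℝ))) *
                    (exp (-(M+1)) * M ^ (t+α)) := by ring
        _ ≤ (C' * (exp (-t) * t ^ (β + (k:ℝ)))) * Real.Gamma (t + α + 1) := by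
            apply mul_le_mul_of_nonneg_left hΓ
            have := rpow_nonneg ht0.le (β + (k:ℝ))
            positivity

lemma prod_delta (μ : Measure ℝ) [SigmaFinite μ] (f1 f2 f3 : ℝ → ℝ)
    (h1 : Integrable f1 μ) (h2 : Integrable f2 μ) (h3 : Integrable f3 μ) :
    ∫ p : ℝ × ℝ, ((f1 p.1 * f3 p.2 + f3 p.1 * f1 p.2) / 2 - f2 p.1 * f2 p.2) ∂(μ.prod μ)
      = (∫ t, f1 t ∂μ) * (∫ t, f3 t ∂μ) - (∫ t, f2 t ∂μ) ^ 2 := by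
  rw [integral_sub (by exact ((h1.mul_prod h3).add (h3.mul_prod h1)).div_const 2)
      (by exact h2.mul_prod h2),
    integral_div,
    integral_add (by exact h1.mul_prod h3) (by exact h3.mul_prod h1),
    integral_prod_mul, integral_prod_mul, integral_prod_mul, sq]
  ring

lemma integral_three {X : Type*} [MeasurableSpace X] (μ : Measure X) (c1 c2 c3 : ℝ)
    (g1 g2 g3 : X → ℝ) (h1 : Integrable g1 μ) (h2 : Integrable g2 μ) (h3 : Integrable g3 μ) :
    ∫ p, c1 * g1 p + (c2 * g2 p + c3 * g3 p) ∂μ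
      = c1 * (∫ p, g1 p ∂μ) + (c2 * (∫ p, g2 p ∂μ) + c3 * (∫ p, g3 p ∂μ)) := by
  rw [integral_add (by exact h1.const_mul c1)
      (by exact (h2.const_mul c2).add (h3.const_mul c3)),
    integral_add (by exact h2.const_mul c2) (by exact h3.const_mul c3),
    integral_const_mul, integral_const_mul, integral_const_mul]

/-- `I_k(β) = ∫₀^∞ x^(t+α) t^β (log t)^k / Γ(t+α+1) dt`, the `k`-th derivative with
respect to `β` of `Γ(β+1) μ(x, β, α)`. -/
noncomputable def volterraI (x α : ℝ) (k : ℕ) (β : ℝ) : ℝ :=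
  ∫ t in Set.Ioi (0 : ℝ),
    x ^ (t + α) * t ^ β * (Real.log t) ^ k / Real.Gamma (t + α + 1)

/-- Schur type inequality for `Δ_n(β) = I_{n-1}(β) I_{n+1}(β) − I_n(β)²`, odd `n ≥ 1`. -/
theorem volterraI_delta_schur (x α : ℝ) (hx : 0 < x) (hα : -1 < α)
    (n : ℕ) (hn1 : 1 ≤ n) (hn : Odd n)
    (β₁ β₂ β₃ : ℝ) (hβ₁ : -1 < β₁) (hβ₂ : -1 < β₂) (hβ₃ : -1 < β₃) :
    0 ≤ (β₁ - β₂) * (β₁ - β₃) *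
          (volterraI x α (n - 1) β₁ * volterraI x α (n + 1) β₁ -
            volterraI x α n β₁ ^ 2) +
        (β₂ - β₁) * (β₂ - β₃) *
          (volterraI x α (n - 1) β₂ * volterraI x α (n + 1) β₂ -
            volterraI x α n β₂ ^ 2) +
        (β₃ - β₁) * (β₃ - β₂) *
          (volterraI x α (n - 1) β₃ * volterraI x α (n + 1) β₃ -
            volterraI x α n β₃ ^ 2) := by
  obtain ⟨m, hm⟩ : ∃ m, n = 2 * m + 1 := by
    obtain ⟨m, h⟩ := hn; exact ⟨m, by omega⟩
  subst hm
  rw [show 2*m+1-1 = 2*m from by omega, show 2*m+1+1 = 2*m+2 from by omega]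
  set μ : Measure ℝ := volume.restrict (Ioi (0:ℝ)) with hμ
  set F : ℕ → ℝ → ℝ → ℝ :=
    fun k β t => x ^ (t + α) * t ^ β * (Real.log t) ^ k / Real.Gamma (t + α + 1) with hF
  have hInt : ∀ (k : ℕ) (β : ℝ), -1 < β → Integrable (F k β) μ :=
    fun k β hβ => volterra_integrable x α hx hα k β hβ
  have hIv : ∀ (k : ℕ) (β : ℝ), volterraI x α k β = ∫ t, F k β t ∂μ := fun k β => rfl
  set ν : Measure (ℝ × ℝ) := μ.prod μ with hν
  set g : ℝ → ℝ × ℝ → ℝ := fun β p =>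
    (F (2*m) β p.1 * F (2*m+2) β p.2 + F (2*m+2) β p.1 * F (2*m) β p.2) / 2
      - F (2*m+1) β p.1 * F (2*m+1) β p.2 with hg
  have hgInt : ∀ β : ℝ, -1 < β → Integrable (g β) ν := fun β hβ =>
    ((((hInt (2*m) β hβ).mul_prod (hInt (2*m+2) β hβ)).add
      ((hInt (2*m+2) β hβ).mul_prod (hInt (2*m) β hβ))).div_const 2).sub
      ((hInt (2*m+1) β hβ).mul_prod (hInt (2*m+1) β hβ))
  have hgVal : ∀ β : ℝ, -1 < β → ∫ p, g β p ∂ν =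
      volterraI x α (2*m) β * volterraI x α (2*m+2) β - volterraI x α (2*m+1) β ^ 2 :=
    fun β hβ => prod_delta μ (F (2*m) β) (F (2*m+1) β) (F (2*m+2) β)
      (hInt _ _ hβ) (hInt _ _ hβ) (hInt _ _ hβ)
  have hsplit : ∫ p, ((β₁-β₂)*(β₁-β₃)) * g β₁ p +
        (((β₂-β₁)*(β₂-β₃)) * g β₂ p + ((β₃-β₁)*(β₃-β₂)) * g β₃ p) ∂ν
      = (β₁-β₂)*(β₁-β₃) * (∫ p, g β₁ p ∂ν) +
        ((β₂-β₁)*(β₂-β₃) * (∫ p, g β₂ p ∂ν) + (β₃-β₁)*(β₃-β₂) * (∫ p, g β₃ p ∂ν)) := by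
    exact integral_three ν _ _ _ (g β₁) (g β₂) (g β₃)
      (hgInt β₁ hβ₁) (hgInt β₂ hβ₂) (hgInt β₃ hβ₃)
  have hae : ∀ᵐ p ∂ν, p ∈ (Ioi (0:ℝ)) ×ˢ (Ioi (0:ℝ)) := by
    rw [hν, hμ, Measure.prod_restrict]
    exact ae_restrict_mem (measurableSet_Ioi.prod measurableSet_Ioi)
  have hnn : 0 ≤ ∫ p, ((β₁-β₂)*(β₁-β₃)) * g β₁ p +
      (((β₂-β₁)*(β₂-β₃)) * g β₂ p + ((β₃-β₁)*(β₃-β₂)) * g β₃ p) ∂ν := by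
    apply integral_nonneg_of_ae
    filter_upwards [hae] with p hp
    have hs : (0:ℝ) < p.1 := hp.1
    have ht : (0:ℝ) < p.2 := hp.2
    have hexp : ∀ β : ℝ, exp ((Real.log p.1 + Real.log p.2) * β) = p.1 ^ β * p.2 ^ β := by
      intro β
      rw [Real.rpow_def_of_pos hs, Real.rpow_def_of_pos ht, ← exp_add]
      congr 1; ring
    have hkey := schur_exp (Real.log p.1 + Real.log p.2) β₁ β₂ β₃
    have hW : 0 ≤ (x ^ (p.1+α) / Real.Gamma (p.1+α+1)) * (x ^ (p.2+α) / Real.Gamma (p.2+α+1)) *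
        ((Real.log p.1 * Real.log p.2)^m)^2 * (Real.log p.1 - Real.log p.2)^2 / 2 := by
      have hG1 : 0 < Real.Gamma (p.1+α+1) := Real.Gamma_pos_of_pos (by linarith)
      have hG2 : 0 < Real.Gamma (p.2+α+1) := Real.Gamma_pos_of_pos (by linarith)
      have e1 : 0 ≤ x ^ (p.1+α) := rpow_nonneg hx.le _
      have e2 : 0 ≤ x ^ (p.2+α) := rpow_nonneg hx.le _
      positivity
    have hfac : ((β₁-β₂)*(β₁-β₃)) * g β₁ p +
        (((β₂-β₁)*(β₂-β₃)) * g β₂ p + ((β₃-β₁)*(β₃-β₂)) * g β₃ p)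
        = ((x ^ (p.1+α) / Real.Gamma (p.1+α+1)) * (x ^ (p.2+α) / Real.Gamma (p.2+α+1)) *
            ((Real.log p.1 * Real.log p.2)^m)^2 * (Real.log p.1 - Real.log p.2)^2 / 2) *
          ((β₁-β₂)*(β₁-β₃)*exp ((Real.log p.1 + Real.log p.2)*β₁)
            + (β₂-β₁)*(β₂-β₃)*exp ((Real.log p.1 + Real.log p.2)*β₂)
            + (β₃-β₁)*(β₃-β₂)*exp ((Real.log p.1 + Real.log p.2)*β₃)) := by
      rw [hexp β₁, hexp β₂, hexp β₃, hg]
      simp only [hF]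
      ring
    rw [hfac]
    exact mul_nonneg hW hkey
  rw [hsplit] at hnn
  rw [hgVal β₁ hβ₁, hgVal β₂ hβ₂, hgVal β₃ hβ₃] at hnn
  linarith [hnn]
end

section
/- Let α > -1, x > 0 and s > 0. Then the function β ↦ G*_β(x, α, s) is decreasing on (-1, ∞): for all -1 < β₁ ≤ β₂ one has G*_{β₂}(x, α, s) ≤ G*_{β₁}(x, α, s). Consequently, for β₁, β₂ > -1 and λ ∈ [0, 1], G*_{λβ₁+(1-λ)β₂}(x, α, s) ≤ max(G*_{β₁}(x, α, s), G*_{β₂}(x, α, s)). -/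
open MeasureTheory Real Set

/-- The Volterra function `μ(x, β, α) = ∫₀^∞ x^(t+α) t^β / (Γ(t+α+1) Γ(β+1)) dt`. -/
noncomputable def volterraMu (x β α : ℝ) : ℝ :=
  ∫ t in Set.Ioi (0 : ℝ),
    x ^ (t + α) * t ^ β / (Real.Gamma (t + α + 1) * Real.Gamma (β + 1))

/-- The incomplete Volterra function
`μ(x, β, α, s) = ∫_s^∞ x^(t+α) t^β / (Γ(t+α+1) Γ(β+1)) dt`. -/
noncomputable def volterraMuInc (x β α s : ℝ) : ℝ :=
  ∫ t in Set.Ioi s,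
    x ^ (t + α) * t ^ β / (Real.Gamma (t + α + 1) * Real.Gamma (β + 1))

/-- The incomplete Volterra function from below
`μ*(x, β, α, s) = ∫₀^s x^(t+α) t^β / (Γ(t+α+1) Γ(β+1)) dt`. -/
noncomputable def volterraMuIncStar (x β α s : ℝ) : ℝ :=
  ∫ t in Set.Ioc (0 : ℝ) s,
    x ^ (t + α) * t ^ β / (Real.Gamma (t + α + 1) * Real.Gamma (β + 1))

/-- The normalized incomplete Volterra function `G_β(x, α, s) = μ(x,β,α,s)/μ(x,β,α)`. -/
noncomputable def volterraG (β x α s : ℝ) : ℝ :=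
  volterraMuInc x β α s / volterraMu x β α

/-- The normalized incomplete Volterra function from below
`G*_β(x, α, s) = μ*(x,β,α,s)/μ(x,β,α)`. -/
noncomputable def volterraGStar (β x α s : ℝ) : ℝ :=
  volterraMuIncStar x β α s / volterraMu x β α

lemma gamma_lb_s18 {y R : ℝ} (hy : 1 ≤ y) (hR : 0 < R) :
    Real.exp (-R) * R ^ (y - 1) ≤ Real.Gamma y := by
  rw [Real.Gamma_eq_integral (by linarith : 0 < y)]
  have h1 : Real.exp (-R) * R ^ (y - 1) = ∫ u in Ioi R, Real.exp (-u) * R ^ (y - 1) := by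
    rw [integral_mul_const, integral_exp_neg_Ioi]
  rw [h1]
  have hint : IntegrableOn (fun u : ℝ => Real.exp (-u) * u ^ (y - 1)) (Ioi 0) :=
    Real.GammaIntegral_convergent (by linarith)
  calc ∫ u in Ioi R, Real.exp (-u) * R ^ (y - 1)
      ≤ ∫ u in Ioi R, Real.exp (-u) * u ^ (y - 1) := by
        apply setIntegral_mono_on
        · exact ((exp_neg_integrableOn_Ioi R one_pos).congr_fun
            (fun u _ => by rw [neg_one_mul]) measurableSet_Ioi).mul_const _
        · exact hint.mono_set (Ioi_subset_Ioi hR.le)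
        · exact measurableSet_Ioi
        · intro u hu
          have : R ^ (y - 1) ≤ u ^ (y - 1) :=
            Real.rpow_le_rpow hR.le (le_of_lt hu) (by linarith)
          exact mul_le_mul_of_nonneg_left this (Real.exp_nonneg _)
    _ ≤ ∫ u in Ioi 0, Real.exp (-u) * u ^ (y - 1) := by
        apply setIntegral_mono_set hint
        · filter_upwards [ae_restrict_mem measurableSet_Ioi] with u hu
          exact mul_nonneg (Real.exp_nonneg _) (Real.rpow_nonneg hu.le _)
        · exact HasSubset.Subset.eventuallyLE (Ioi_subset_Ioi hR.le)


noncomputable def vg (x α β : ℝ) (t : ℝ) : ℝ :=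
  x ^ (t + α) * t ^ β / Real.Gamma (t + α + 1)

lemma gamma_arg_ne (α : ℝ) (hα : -1 < α) {t : ℝ} (ht : 0 ≤ t) :
    ∀ m : ℕ, t + α + 1 ≠ -m := by
  intro m
  have : (0:ℝ) < t + α + 1 := by linarith
  have hm : (0:ℝ) ≤ m := Nat.cast_nonneg m
  intro h; rw [h] at this; linarith

lemma vg_contOn (x α β : ℝ) (hx : 0 < x) (hα : -1 < α) :
    ContinuousOn (vg x α β) (Ioi 0) := by
  intro t ht
  have ht' : (0:ℝ) < t := ht
  apply ContinuousWithinAt.div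
  · apply ContinuousWithinAt.mul
    · exact (ContinuousAt.comp (g := (x ^ · : ℝ → ℝ))
        (Real.continuousAt_const_rpow hx.ne')
        ((continuous_id.add continuous_const).continuousAt)).continuousWithinAt
    · exact (Real.continuousAt_rpow_const t β (Or.inl ht'.ne')).continuousWithinAt
  · have h1 : ContinuousAt Real.Gamma (t + α + 1) :=
      (Real.differentiableAt_Gamma (gamma_arg_ne α hα ht'.le)).continuousAt
    have h2 : ContinuousAt (fun u : ℝ => u + α + 1) t := by fun_prop
    exact (ContinuousAt.comp (x := t) h1 h2).continuousWithinAt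
  · exact (Real.Gamma_pos_of_pos (by linarith : (0:ℝ) < t + α + 1)).ne'

lemma vg_nonneg {x α β : ℝ} (hx : 0 < x) (hα : -1 < α) {t : ℝ} (ht : 0 < t) :
    0 ≤ vg x α β t := by
  have h1 : 0 < x ^ (t + α) := Real.rpow_pos_of_pos hx _
  have h2 : 0 ≤ t ^ β := Real.rpow_nonneg ht.le _
  have h3 : 0 < Real.Gamma (t + α + 1) := Real.Gamma_pos_of_pos (by linarith)
  unfold vg; positivity

lemma vg_pos {x α β : ℝ} (hx : 0 < x) (hα : -1 < α) {t : ℝ} (ht : 0 < t) :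
    0 < vg x α β t := by
  have h1 : 0 < x ^ (t + α) := Real.rpow_pos_of_pos hx _
  have h2 : 0 < t ^ β := Real.rpow_pos_of_pos ht _
  have h3 : 0 < Real.Gamma (t + α + 1) := Real.Gamma_pos_of_pos (by linarith)
  unfold vg; positivity

lemma w_contOn (x α : ℝ) (hx : 0 < x) (hα : -1 < α) :
    ContinuousOn (fun t : ℝ => x ^ (t + α) / Real.Gamma (t + α + 1)) (Icc 0 1) := by
  intro t ht
  have ht' : (0:ℝ) ≤ t := ht.1
  apply ContinuousWithinAt.div
  · exact (ContinuousAt.comp (g := (x ^ · : ℝ → ℝ))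
      (Real.continuousAt_const_rpow hx.ne')
      ((continuous_id.add continuous_const).continuousAt)).continuousWithinAt
  · have h1 : ContinuousAt Real.Gamma (t + α + 1) :=
      (Real.differentiableAt_Gamma (gamma_arg_ne α hα ht')).continuousAt
    have h2 : ContinuousAt (fun u : ℝ => u + α + 1) t := by fun_prop
    exact (ContinuousAt.comp (x := t) h1 h2).continuousWithinAt
  · exact (Real.Gamma_pos_of_pos (by linarith : (0:ℝ) < t + α + 1)).ne'

lemma vg_integrableOn {x α β : ℝ} (hx : 0 < x) (hα : -1 < α) (hβ : -1 < β) :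
    IntegrableOn (vg x α β) (Ioi 0) := by
  have hmeas : AEStronglyMeasurable (vg x α β) (volume.restrict (Ioi 0)) :=
    (vg_contOn x α β hx hα).aestronglyMeasurable measurableSet_Ioi
  rw [← Ioc_union_Ioi_eq_Ioi (zero_le_one (α := ℝ))]
  apply IntegrableOn.union
  · -- on Ioc 0 1
    obtain ⟨z, hz, hzC⟩ := isCompact_Icc.exists_isMaxOn (nonempty_Icc.mpr zero_le_one)
      (w_contOn x α hx hα)
    set C : ℝ := x ^ (z + α) / Real.Gamma (z + α + 1) with hCdef
    have hdom : IntegrableOn (fun t : ℝ => C * t ^ β) (Ioc 0 1) := by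
      have h := (intervalIntegral.intervalIntegrable_rpow' (a := 0) (b := 1) hβ)
      rw [intervalIntegrable_iff_integrableOn_Ioc_of_le zero_le_one] at h
      exact h.const_mul C
    apply Integrable.mono' hdom
      (hmeas.mono_measure (Measure.restrict_mono Ioc_subset_Ioi_self le_rfl))
    filter_upwards [ae_restrict_mem measurableSet_Ioc] with t ht
    have ht0 : (0:ℝ) < t := ht.1
    rw [Real.norm_of_nonneg (vg_nonneg hx hα ht0)]
    have : vg x α β t = (x ^ (t + α) / Real.Gamma (t + α + 1)) * t ^ β := by
      unfold vg; ring
    rw [this]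
    exact mul_le_mul_of_nonneg_right (hzC ⟨ht0.le, ht.2⟩) (Real.rpow_nonneg ht0.le _)
  · -- on Ioi 1
    set R : ℝ := Real.exp 1 * x + 1 with hRdef
    have hR : 0 < R := by positivity
    have hxR : x < R := by nlinarith [Real.add_one_le_exp 1]
    have hdivpos : 0 < x / R := div_pos hx hR
    have hdivlt : x / R < 1 := (div_lt_one hR).mpr hxR
    set b : ℝ := -Real.log (x / R) with hbdef
    have hb : 0 < b := neg_pos.mpr (Real.log_neg hdivpos hdivlt)
    set C2 : ℝ := Real.exp R * (x / R) ^ α with hC2def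
    have hdom0 : IntegrableOn (fun t : ℝ => C2 * (t ^ β * Real.exp (-b * t ^ (1:ℝ)))) (Ioi 0) :=
      (integrableOn_rpow_mul_exp_neg_mul_rpow hβ zero_lt_one hb).const_mul C2
    have hdom : IntegrableOn (fun t : ℝ => C2 * (t ^ β * Real.exp (-b * t ^ (1:ℝ)))) (Ioi 1) :=
      hdom0.mono_set (Ioi_subset_Ioi zero_le_one)
    apply Integrable.mono' hdom
      (hmeas.mono_measure (Measure.restrict_mono (Ioi_subset_Ioi zero_le_one) le_rfl))
    filter_upwards [ae_restrict_mem measurableSet_Ioi] with t ht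
    have ht1 : (1:ℝ) < t := ht
    have ht0 : (0:ℝ) < t := by linarith
    rw [Real.norm_of_nonneg (vg_nonneg hx hα ht0)]
    have hgam : Real.exp (-R) * R ^ (t + α) ≤ Real.Gamma (t + α + 1) := by
      have := gamma_lb_s18 (y := t + α + 1) (by linarith) hR
      rwa [show t + α + 1 - 1 = t + α by ring] at this
    have hden : 0 < Real.exp (-R) * R ^ (t + α) := by positivity
    have step1 : vg x α β t ≤ x ^ (t + α) * t ^ β / (Real.exp (-R) * R ^ (t + α)) := by
      unfold vg
      have hnum : 0 ≤ x ^ (t + α) * t ^ β :=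
        mul_nonneg (Real.rpow_nonneg hx.le _) (Real.rpow_nonneg ht0.le _)
      exact div_le_div_of_nonneg_left hnum hden hgam
    refine step1.trans (le_of_eq ?_)
    have e1 : x ^ (t + α) = (x / R) ^ (t + α) * R ^ (t + α) := by
      rw [Real.div_rpow hx.le hR.le, div_mul_cancel₀]
      exact (Real.rpow_pos_of_pos hR _).ne'
    have e2 : (x / R) ^ (t + α) = (x / R) ^ t * (x / R) ^ α := Real.rpow_add hdivpos _ _
    have e3 : (x / R) ^ t = Real.exp (-b * t) := by
      rw [Real.rpow_def_of_pos hdivpos, hbdef]; ring_nf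
    rw [e1, e2, e3, Real.rpow_one, hC2def, Real.exp_neg]
    have hRpow : (0:ℝ) < R ^ (t + α) := Real.rpow_pos_of_pos hR _
    field_simp

lemma vg_pos_Ioc {x α β s : ℝ} (hx : 0 < x) (hα : -1 < α) (hβ : -1 < β) (hs : 0 < s) :
    0 < ∫ t in Ioc (0:ℝ) s, vg x α β t := by
  rw [setIntegral_pos_iff_support_of_nonneg_ae]
  · have hsub : Ioc (0:ℝ) s ⊆ Function.support (vg x α β) ∩ Ioc 0 s := fun t ht =>
      ⟨(vg_pos hx hα ht.1).ne', ht⟩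
    calc (0 : ENNReal) < volume (Ioc (0:ℝ) s) := by
          rw [Real.volume_Ioc]; simpa using hs
      _ ≤ volume (Function.support (vg x α β) ∩ Ioc 0 s) := measure_mono hsub
  · filter_upwards [ae_restrict_mem measurableSet_Ioc] with t ht
    exact vg_nonneg hx hα ht.1
  · exact (vg_integrableOn hx hα hβ).mono_set Ioc_subset_Ioi_self

lemma vg_pos_Ioi {x α β s : ℝ} (hx : 0 < x) (hα : -1 < α) (hβ : -1 < β) (hs : 0 < s) :
    0 < ∫ t in Ioi s, vg x α β t := by
  rw [setIntegral_pos_iff_support_of_nonneg_ae]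
  · have hsub : Ioi s ⊆ Function.support (vg x α β) ∩ Ioi s := fun t ht =>
      ⟨(vg_pos hx hα (hs.trans ht)).ne', ht⟩
    calc (0 : ENNReal) < volume (Ioi s) := by simp
      _ ≤ volume (Function.support (vg x α β) ∩ Ioi s) := measure_mono hsub
  · filter_upwards [ae_restrict_mem measurableSet_Ioi] with t ht
    exact vg_nonneg hx hα (hs.trans ht)
  · exact (vg_integrableOn hx hα hβ).mono_set (Ioi_subset_Ioi hs.le)

lemma muIncStar_eq (x α β s : ℝ) :
    volterraMuIncStar x β α s = (∫ t in Ioc (0:ℝ) s, vg x α β t) / Real.Gamma (β + 1) := by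
  unfold volterraMuIncStar vg
  simp_rw [div_mul_eq_div_div]
  exact integral_div _ _

lemma mu_eq {x α β : ℝ} (s : ℝ) (hx : 0 < x) (hα : -1 < α) (hβ : -1 < β) (hs : 0 < s) :
    volterraMu x β α =
      ((∫ t in Ioc (0:ℝ) s, vg x α β t) + ∫ t in Ioi s, vg x α β t) / Real.Gamma (β + 1) := by
  unfold volterraMu vg
  simp_rw [div_mul_eq_div_div]
  rw [integral_div]
  congr 1
  rw [← Ioc_union_Ioi_eq_Ioi hs.le]
  exact setIntegral_union (Ioc_disjoint_Ioi le_rfl) measurableSet_Ioi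
    ((vg_integrableOn hx hα hβ).mono_set Ioc_subset_Ioi_self)
    ((vg_integrableOn hx hα hβ).mono_set (Ioi_subset_Ioi hs.le))

lemma gstar_eq {x α β : ℝ} (s : ℝ) (hx : 0 < x) (hα : -1 < α) (hβ : -1 < β) (hs : 0 < s) :
    volterraGStar β x α s = (∫ t in Ioc (0:ℝ) s, vg x α β t) /
      ((∫ t in Ioc (0:ℝ) s, vg x α β t) + ∫ t in Ioi s, vg x α β t) := by
  rw [volterraGStar, muIncStar_eq, mu_eq s hx hα hβ hs, div_div_div_comm,
    div_self (Real.Gamma_pos_of_pos (by linarith : (0:ℝ) < β + 1)).ne', div_one]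

/-- For `α > -1`, `x > 0`, `s > 0`, the function `β ↦ G*_β(x, α, s)` is decreasing on
`(-1, ∞)`; consequently `G*` at a convex combination is bounded by the max. -/
theorem volterraGStar_decreasing_in_beta (x α s : ℝ)
    (hx : 0 < x) (hα : -1 < α) (hs : 0 < s) :
    (∀ β₁ β₂ : ℝ, -1 < β₁ → β₁ ≤ β₂ →
      volterraGStar β₂ x α s ≤ volterraGStar β₁ x α s) ∧
    (∀ β₁ β₂ : ℝ, -1 < β₁ → -1 < β₂ → ∀ l : ℝ, l ∈ Set.Icc (0 : ℝ) 1 →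
      volterraGStar (l * β₁ + (1 - l) * β₂) x α s ≤
        max (volterraGStar β₁ x α s) (volterraGStar β₂ x α s)) := by
  have mono : ∀ β₁ β₂ : ℝ, -1 < β₁ → β₁ ≤ β₂ →
      volterraGStar β₂ x α s ≤ volterraGStar β₁ x α s := by
    intro β₁ β₂ hβ₁ hle
    have hβ₂ : -1 < β₂ := hβ₁.trans_le hle
    set δ : ℝ := β₂ - β₁ with hδdef
    have hδ : 0 ≤ δ := by simp only [hδdef]; linarith
    have hA1 : 0 < ∫ t in Ioc (0:ℝ) s, vg x α β₁ t := vg_pos_Ioc hx hα hβ₁ hs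
    have hA2 : 0 < ∫ t in Ioc (0:ℝ) s, vg x α β₂ t := vg_pos_Ioc hx hα hβ₂ hs
    have hB1 : 0 < ∫ t in Ioi s, vg x α β₁ t := vg_pos_Ioi hx hα hβ₁ hs
    have hB2 : 0 < ∫ t in Ioi s, vg x α β₂ t := vg_pos_Ioi hx hα hβ₂ hs
    have hvg : ∀ (γ t : ℝ), vg x α γ t =
        (x ^ (t + α) / Real.Gamma (t + α + 1)) * t ^ γ := by
      intro γ t; unfold vg; ring
    have hA : (∫ t in Ioc (0:ℝ) s, vg x α β₂ t) ≤
        s ^ δ * ∫ t in Ioc (0:ℝ) s, vg x α β₁ t := by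
      rw [← integral_const_mul]
      apply setIntegral_mono_on ((vg_integrableOn hx hα hβ₂).mono_set Ioc_subset_Ioi_self)
        (((vg_integrableOn hx hα hβ₁).mono_set Ioc_subset_Ioi_self).const_mul _)
        measurableSet_Ioc
      intro t ht
      have ht0 : (0:ℝ) < t := ht.1
      have h1 : t ^ β₂ = t ^ β₁ * t ^ δ := by
        rw [← Real.rpow_add ht0]; congr 1; simp only [hδdef]; ring
      have h2 : t ^ δ ≤ s ^ δ := Real.rpow_le_rpow ht0.le ht.2 hδ
      have hw : 0 ≤ x ^ (t + α) / Real.Gamma (t + α + 1) := by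
        have := (Real.Gamma_pos_of_pos (by linarith : (0:ℝ) < t + α + 1))
        positivity
      have h3 : (0:ℝ) ≤ t ^ β₁ := Real.rpow_nonneg ht0.le _
      rw [hvg, hvg, h1]
      nlinarith [mul_le_mul_of_nonneg_left h2 (mul_nonneg hw h3)]
    have hB : s ^ δ * (∫ t in Ioi s, vg x α β₁ t) ≤ ∫ t in Ioi s, vg x α β₂ t := by
      rw [← integral_const_mul]
      apply setIntegral_mono_on
        (((vg_integrableOn hx hα hβ₁).mono_set (Ioi_subset_Ioi hs.le)).const_mul _)
        ((vg_integrableOn hx hα hβ₂).mono_set (Ioi_subset_Ioi hs.le))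
        measurableSet_Ioi
      intro t ht
      have hts : s < t := ht
      have ht0 : (0:ℝ) < t := hs.trans hts
      have h1 : t ^ β₂ = t ^ β₁ * t ^ δ := by
        rw [← Real.rpow_add ht0]; congr 1; simp only [hδdef]; ring
      have h2 : s ^ δ ≤ t ^ δ := Real.rpow_le_rpow hs.le hts.le hδ
      have hw : 0 ≤ x ^ (t + α) / Real.Gamma (t + α + 1) := by
        have := (Real.Gamma_pos_of_pos (by linarith : (0:ℝ) < t + α + 1))
        positivity
      have h3 : (0:ℝ) ≤ t ^ β₁ := Real.rpow_nonneg ht0.le _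
      rw [hvg, hvg, h1]
      nlinarith [mul_le_mul_of_nonneg_left h2 (mul_nonneg hw h3)]
    have key : (∫ t in Ioc (0:ℝ) s, vg x α β₂ t) * (∫ t in Ioi s, vg x α β₁ t) ≤
        (∫ t in Ioc (0:ℝ) s, vg x α β₁ t) * (∫ t in Ioi s, vg x α β₂ t) := by
      nlinarith [mul_le_mul_of_nonneg_right hA hB1.le, mul_le_mul_of_nonneg_left hB hA1.le]
    rw [gstar_eq s hx hα hβ₁ hs, gstar_eq s hx hα hβ₂ hs,
      div_le_div_iff₀ (by positivity) (by positivity)]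
    nlinarith [key]
  refine ⟨mono, ?_⟩
  intro β₁ β₂ hβ₁ hβ₂ l hl
  obtain ⟨hl0, hl1⟩ := hl
  rcases le_total β₁ β₂ with h | h
  · have hm : β₁ ≤ l * β₁ + (1 - l) * β₂ := by nlinarith
    exact (mono β₁ _ hβ₁ hm).trans (le_max_left _ _)
  · have hm : β₂ ≤ l * β₁ + (1 - l) * β₂ := by nlinarith
    exact (mono β₂ _ hβ₂ hm).trans (le_max_right _ _)
end
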